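/- In the Orlik–Solomon algebra of the braid arrangement on [n], any product of generators g_{i_1 j_1} ··· g_{i_k j_k} is a ℚ-linear combination of monomials of the form g_{J_1} ··· g_{J_h}, where J_1, ..., J_h are pairwise disjoint tuples of distinct elements of [n], each of length at least 2, and g_J for J = (j_1, ..., j_m) denotes g_{j_1 j_2} g_{j_2 j_3} ··· g_{j_{m-1} j_m} (i.e., every monomial reduces to a product of 'chains' on disjoint index sets). -/

import Mathlib

set_option linter.unusedSectionVars false
set_option maxHeartbeats 1000000


/-- The chain monomial `g_J = g_{j_1 j_2} g_{j_2 j_3} ⋯ g_{j_{m-1} j_m}` associated to a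
list `J = [j_1, …, j_m]`. -/
def chainProd {A : Type*} [Ring A] {n : ℕ} (g : Fin n → Fin n → A)
    (J : List (Fin n)) : A :=
  ((J.zip J.tail).map (fun p => g p.1 p.2)).prod

namespace OS13
section NOE
variable {A : Type*} [Ring A] [Algebra ℚ A]
def NOE (x y : A) : Prop := x = y ∨ x = -y
theorem NOE.of_eq {x y : A} (h : x = y) : NOE x y := Or.inl h
theorem NOE.refl (x : A) : NOE x x := Or.inl rfl
theorem NOE.symm {x y : A} (h : NOE x y) : NOE y x := by
  rcases h with rfl | rfl
  · exact Or.inl rfl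
  · exact Or.inr (neg_neg _).symm
theorem NOE.trans {x y z : A} (h1 : NOE x y) (h2 : NOE y z) : NOE x z := by
  rcases h1 with rfl | rfl
  · exact h2
  · rcases h2 with rfl | rfl
    · exact Or.inr rfl
    · exact Or.inl (neg_neg _)
theorem NOE.mul_left (c : A) {x y : A} (h : NOE x y) : NOE (c * x) (c * y) := by
  rcases h with rfl | rfl
  · exact Or.inl rfl
  · exact Or.inr (by rw [mul_neg])
theorem NOE.mul_right (c : A) {x y : A} (h : NOE x y) : NOE (x * c) (y * c) := by
  rcases h with rfl | rfl
  · exact Or.inl rfl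
  · exact Or.inr (by rw [neg_mul])
theorem NOE.neg_left {x y : A} (h : NOE x y) : NOE (-x) y := by
  rcases h with rfl | rfl
  · exact Or.inr rfl
  · exact Or.inl (neg_neg _)
theorem NOE.mem {x y : A} {p : Submodule ℚ A} (h : NOE x y) (hy : y ∈ p) : x ∈ p := by
  rcases h with rfl | rfl
  · exact hy
  · exact neg_mem hy
theorem NOE.eq_zero {x y : A} (h : NOE x y) (hy : y = 0) : x = 0 := by
  rcases h with rfl | rfl <;> simp [hy]
end NOE

section Main
variable {A : Type*} [Ring A] [Algebra ℚ A] {n : ℕ} {g : Fin n → Fin n → A}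

theorem chain_nil : chainProd g [] = 1 := by simp [chainProd]
theorem chain_singleton (x : Fin n) : chainProd g [x] = 1 := by simp [chainProd]
theorem chain_cons (x y : Fin n) (T : List (Fin n)) :
    chainProd g (x :: y :: T) = g x y * chainProd g (y :: T) := by
  simp [chainProd]
theorem chain_pair (x y : Fin n) : chainProd g [x, y] = g x y := by
  simp [chain_cons, chain_singleton]
theorem chain_split : ∀ (U : List (Fin n)) (v : Fin n) (V : List (Fin n)),
    chainProd g (U ++ v :: V) = chainProd g (U ++ [v]) * chainProd g (v :: V)
  | [], v, V => by simp [chain_singleton]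
  | [u], v, V => by simp [chain_cons, chain_pair, chain_singleton]
  | u :: u' :: U, v, V => by
    have ih := chain_split (u' :: U) v V
    simp only [List.cons_append, chain_cons] at *
    rw [ih, mul_assoc]
theorem chain_snoc2 (X : List (Fin n)) (v w : Fin n) :
    chainProd g (X ++ [v, w]) = chainProd g (X ++ [v]) * g v w := by
  have := chain_split (g := g) X v [w]
  rw [this, chain_pair]

def wp (g : Fin n → Fin n → A) (l : List (Fin n × Fin n)) : A :=
  (l.map (fun p => g p.1 p.2)).prod
theorem chain_eq_wp (J : List (Fin n)) : chainProd g J = wp g (J.zip J.tail) := rfl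
theorem wp_nil : wp g ([] : List (Fin n × Fin n)) = 1 := rfl
theorem wp_cons (p : Fin n × Fin n) (l : List (Fin n × Fin n)) :
    wp g (p :: l) = g p.1 p.2 * wp g l := by simp [wp]
theorem wp_append (l₁ l₂ : List (Fin n × Fin n)) :
    wp g (l₁ ++ l₂) = wp g l₁ * wp g l₂ := by simp [wp]

theorem noe_anti_w (hanti : ∀ i j k l, g i j * g k l = -(g k l * g i j)) :
    ∀ (l : List (Fin n × Fin n)) (x y : Fin n), NOE (g x y * wp g l) (wp g l * g x y)
  | [], x, y => by rw [wp_nil, one_mul, mul_one]; exact NOE.refl _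
  | p :: l, x, y => by
    have ih := noe_anti_w hanti l x y
    have e1 : g x y * wp g (p :: l) = -(g p.1 p.2 * (g x y * wp g l)) := by
      rw [wp_cons, ← mul_assoc, hanti x y p.1 p.2, neg_mul, mul_assoc]
    rw [e1]
    refine NOE.neg_left (NOE.trans (NOE.mul_left _ ih) (NOE.of_eq ?_))
    rw [← mul_assoc, wp_cons]

theorem noe_anti_chain (hanti : ∀ i j k l, g i j * g k l = -(g k l * g i j))
    (x y : Fin n) (J : List (Fin n)) :
    NOE (g x y * chainProd g J) (chainProd g J * g x y) := by
  rw [chain_eq_wp]; exact noe_anti_w hanti _ x y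

theorem noe_comm_w (hanti : ∀ i j k l, g i j * g k l = -(g k l * g i j)) :
    ∀ (l₁ l₂ : List (Fin n × Fin n)), NOE (wp g l₁ * wp g l₂) (wp g l₂ * wp g l₁)
  | [], l₂ => by rw [wp_nil, one_mul, mul_one]; exact NOE.refl _
  | p :: l, l₂ => by
    refine NOE.trans (NOE.of_eq (by rw [wp_cons, mul_assoc])) ?_
    refine NOE.trans (NOE.mul_left (g p.1 p.2) (noe_comm_w hanti l l₂)) ?_
    refine NOE.trans (NOE.of_eq (mul_assoc _ _ _).symm) ?_
    refine NOE.trans (NOE.mul_right (wp g l) (noe_anti_w hanti l₂ p.1 p.2)) ?_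
    exact NOE.of_eq (by rw [mul_assoc, wp_cons])

theorem prod_map_chain : ∀ (M : List (List (Fin n))),
    (M.map (chainProd g)).prod = wp g ((M.map (fun J => J.zip J.tail)).flatten)
  | [] => by simp [wp_nil]
  | J :: M => by
    simp only [List.map_cons, List.prod_cons, List.flatten_cons, wp_append,
      prod_map_chain M, chain_eq_wp]

theorem noe_anti_prodchain (hanti : ∀ i j k l, g i j * g k l = -(g k l * g i j))
    (x y : Fin n) (M : List (List (Fin n))) :
    NOE (g x y * (M.map (chainProd g)).prod) ((M.map (chainProd g)).prod * g x y) := by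
  rw [prod_map_chain]; exact noe_anti_w hanti _ x y

theorem noe_comm_chain_prodchain (hanti : ∀ i j k l, g i j * g k l = -(g k l * g i j))
    (K : List (Fin n)) (M : List (List (Fin n))) :
    NOE (chainProd g K * (M.map (chainProd g)).prod)
        ((M.map (chainProd g)).prod * chainProd g K) := by
  rw [prod_map_chain, chain_eq_wp]; exact noe_comm_w hanti _ _

theorem rev_chain (hsymm : ∀ i j, g i j = g j i)
    (hanti : ∀ i j k l, g i j * g k l = -(g k l * g i j)) :
    ∀ (J : List (Fin n)), NOE (chainProd g J.reverse) (chainProd g J)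
  | [] => NOE.refl _
  | [x] => NOE.refl _
  | c :: h :: T' => by
    have ih := rev_chain hsymm hanti (h :: T')
    have e3 : chainProd g ((c :: h :: T').reverse)
        = chainProd g ((h :: T').reverse) * g h c := by
      have e1 : (c :: h :: T').reverse = T'.reverse ++ [h, c] := by simp
      have e2 : (h :: T').reverse = T'.reverse ++ [h] := by simp
      rw [e1, e2, chain_snoc2]
    rw [e3]
    refine NOE.trans (NOE.mul_right _ ih) ?_
    refine NOE.trans (noe_anti_chain hanti h c (h :: T')).symm ?_
    rw [hsymm h c, ← chain_cons]
    exact NOE.refl _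

theorem arn (hsymm : ∀ i j, g i j = g j i)
    (hanti : ∀ i j k l, g i j * g k l = -(g k l * g i j))
    (harnold : ∀ i j k, i ≠ j → j ≠ k → i ≠ k →
      g i j * g j k + g j k * g k i + g k i * g i j = 0)
    {i j k : Fin n} (hij : i ≠ j) (hjk : j ≠ k) (hik : i ≠ k) :
    g i j * g j k = g i j * g i k + g i k * g j k := by
  have h := harnold i j k hij hjk hik
  have h1 : g j k * g k i = -(g i k * g j k) := by rw [hanti j k k i, hsymm k i]
  have h2 : g k i * g i j = -(g i j * g i k) := by rw [hanti k i i j, hsymm k i]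
  rw [h1, h2] at h
  have := eq_of_sub_eq_zero (a := g i j * g j k) (b := g i j * g i k + g i k * g j k) ?_
  · exact this
  · rw [← h]; abel

/-- span of chain monomials over all permutations of a fixed index list -/
def spanPerm (g : Fin n → Fin n → A) (M : List (Fin n)) : Submodule ℚ A :=
  Submodule.span ℚ {a | ∃ K : List (Fin n), K.Perm M ∧ a = chainProd g K}

theorem chain_mem_spanPerm {K M : List (Fin n)} (h : K.Perm M) :
    chainProd g K ∈ spanPerm g M := Submodule.subset_span ⟨K, h, rfl⟩

theorem spanPerm_le {M M' : List (Fin n)} (h : M.Perm M') :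
    spanPerm g M ≤ spanPerm g M' := by
  refine Submodule.span_mono ?_
  rintro a ⟨K, hK, rfl⟩
  exact ⟨K, hK.trans h, rfl⟩

theorem span_apply_mem {s : Set A} {p : Submodule ℚ A} (F : A →ₗ[ℚ] A)
    (h : ∀ a ∈ s, F a ∈ p) {x : A} (hx : x ∈ Submodule.span ℚ s) : F x ∈ p :=
  (Submodule.span_le (p := Submodule.comap F p)).2 (fun a ha => h a ha) hx

/-- Lemma A: attaching a fresh vertex `x` by an edge to a vertex `z` of a chain. -/
theorem lemA (hsymm : ∀ i j, g i j = g j i)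
    (hanti : ∀ i j k l, g i j * g k l = -(g k l * g i j))
    (harnold : ∀ i j k, i ≠ j → j ≠ k → i ≠ k →
      g i j * g j k + g j k * g k i + g k i * g i j = 0)
    (x : Fin n) :
    ∀ (V U : List (Fin n)) (z : Fin n), (U ++ z :: V).Nodup → x ∉ U ++ z :: V →
      g x z * chainProd g (U ++ z :: V) ∈ spanPerm g (x :: (U ++ z :: V))
  | [], U, z, hnd, hx => by
    have hrev : NOE (chainProd g ((z :: U.reverse).reverse)) (chainProd g (z :: U.reverse)) :=
      rev_chain hsymm hanti _
    have e : (z :: U.reverse).reverse = U ++ [z] := by simp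
    rw [e] at hrev
    have h1 : NOE (g x z * chainProd g (U ++ [z]))
        (chainProd g (x :: z :: U.reverse)) := by
      refine NOE.trans (NOE.mul_left _ hrev) (NOE.of_eq ?_)
      rw [chain_cons]
    refine h1.mem (chain_mem_spanPerm (List.Perm.cons x ?_))
    have h2 : (U ++ [z]).reverse = z :: U.reverse := by simp
    rw [← h2]
    exact List.reverse_perm _
  | b :: V', U, z, hnd, hx => by
    have hzmem : z ∈ U ++ z :: b :: V' := List.mem_append_right _ (List.mem_cons_self)
    have hbmem : b ∈ U ++ z :: b :: V' :=
      List.mem_append_right _ (List.mem_cons_of_mem _ (List.mem_cons_self))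
    have hxz : x ≠ z := fun h => hx (h ▸ hzmem)
    have hxb : x ≠ b := fun h => hx (h ▸ hbmem)
    have hzb : z ≠ b := by
      have h2 := (List.nodup_append.mp hnd).2.1
      exact (List.nodup_cons.mp h2).1 ∘ (fun h => h ▸ List.mem_cons_self)
    have hsplit : chainProd g (U ++ z :: b :: V')
        = chainProd g (U ++ [z]) * (g z b * chainProd g (b :: V')) := by
      rw [chain_split U z (b :: V'), chain_cons]
    have harn : g x z * g z b = g x z * g x b + g x b * g z b :=
      arn hsymm hanti harnold hxz hzb hxb
    -- term 1
    have t1 : chainProd g (U ++ [z]) * (g x z * (g x b * chainProd g (b :: V')))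
        ∈ spanPerm g (x :: (U ++ z :: b :: V')) := by
      have e : chainProd g (U ++ [z]) * (g x z * (g x b * chainProd g (b :: V')))
          = chainProd g (U ++ z :: x :: b :: V') := by
        rw [← chain_cons x b V', hsymm x z, ← chain_cons z x (b :: V')]
        have := chain_split (g := g) U z (x :: b :: V')
        rw [this]
      rw [e]
      refine chain_mem_spanPerm ?_
      simpa using (List.perm_middle (l₁ := U ++ [z]) (a := x) (l₂ := b :: V'))
    -- term 2
    have t2 : chainProd g (U ++ [z]) * (g x b * (g z b * chainProd g (b :: V')))
        ∈ spanPerm g (x :: (U ++ z :: b :: V')) := by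
      have hnd' : ((U ++ [z]) ++ b :: V').Nodup := by simpa using hnd
      have hx' : x ∉ (U ++ [z]) ++ b :: V' := by simpa using hx
      have ih := lemA hsymm hanti harnold x V' (U ++ [z]) b hnd' hx'
      have eL : (U ++ [z]) ++ b :: V' = U ++ z :: b :: V' := by simp
      rw [eL] at ih
      have hno : NOE (chainProd g (U ++ [z]) * (g x b * (g z b * chainProd g (b :: V'))))
          (g x b * chainProd g (U ++ z :: b :: V')) := by
        refine NOE.trans (NOE.of_eq (by rw [← mul_assoc])) ?_
        refine NOE.trans (NOE.mul_right _ (noe_anti_chain hanti x b (U ++ [z])).symm) ?_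
        refine NOE.of_eq ?_
        rw [mul_assoc, ← hsplit]
      exact hno.mem ih
    -- assemble
    have hno2 : NOE (g x z * chainProd g (U ++ z :: b :: V'))
        (chainProd g (U ++ [z]) * (g x z * (g x b * chainProd g (b :: V')))
          + chainProd g (U ++ [z]) * (g x b * (g z b * chainProd g (b :: V')))) := by
      refine NOE.trans (NOE.of_eq (by rw [hsplit, ← mul_assoc])) ?_
      refine NOE.trans (NOE.mul_right _ (noe_anti_chain hanti x z (U ++ [z]))) ?_
      refine NOE.of_eq ?_
      rw [mul_assoc, ← mul_assoc (g x z), harn]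
      noncomm_ring
    exact hno2.mem (Submodule.add_mem _ t1 t2)

theorem nodup_triple {S' : List (Fin n)} {u v t : Fin n} {T' : List (Fin n)}
    (h : (S' ++ u :: v :: t :: T').Nodup) : u ≠ v ∧ v ≠ t ∧ u ≠ t := by
  have hsub : List.Sublist [u, v, t] (S' ++ u :: v :: t :: T') := by
    refine List.Sublist.trans ?_ (List.sublist_append_right S' _)
    exact List.cons_sublist_cons.mpr (List.cons_sublist_cons.mpr
      (List.cons_sublist_cons.mpr (List.nil_sublist _)))
  have h2 := List.Nodup.sublist hsub h
  simp only [List.nodup_cons, List.mem_cons, List.mem_singleton, List.not_mem_nil,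
    or_false, not_or, List.nodup_nil, and_true] at h2
  exact ⟨h2.1.1, h2.2.1, h2.1.2⟩

/-- pendant identity: an interior vertex `v` of a chain can be split off as a pendant
edge attached to one of its two neighbours. -/
theorem pendant (hsymm : ∀ i j, g i j = g j i)
    (hanti : ∀ i j k l, g i j * g k l = -(g k l * g i j))
    (harnold : ∀ i j k, i ≠ j → j ≠ k → i ≠ k →
      g i j * g j k + g j k * g k i + g k i * g i j = 0)
    {S' : List (Fin n)} {u v t : Fin n} {T' : List (Fin n)}
    (h : (S' ++ u :: v :: t :: T').Nodup) :
    ∃ a b : A, NOE a (g v u * chainProd g (S' ++ u :: t :: T')) ∧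
      NOE b (g v t * chainProd g (S' ++ u :: t :: T')) ∧
      chainProd g (S' ++ u :: v :: t :: T') = a + b := by
  obtain ⟨huv, hvt, hut⟩ := nodup_triple h
  have harn : g u v * g v t = g u v * g u t + g u t * g v t :=
    arn hsymm hanti harnold huv hvt hut
  have hsplit : chainProd g (S' ++ u :: v :: t :: T')
      = chainProd g (S' ++ [u]) * (g u v * (g v t * chainProd g (t :: T'))) := by
    rw [chain_split S' u (v :: t :: T'), chain_cons, chain_cons]
  refine ⟨chainProd g (S' ++ [u]) * (g u v * (g u t * chainProd g (t :: T'))),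
          chainProd g (S' ++ [u]) * (g u t * (g v t * chainProd g (t :: T'))), ?_, ?_, ?_⟩
  · refine NOE.trans (NOE.of_eq (by rw [← mul_assoc])) ?_
    refine NOE.trans (NOE.mul_right _ (noe_anti_chain hanti u v (S' ++ [u])).symm) ?_
    refine NOE.of_eq ?_
    rw [hsymm u v, mul_assoc, ← chain_cons, ← chain_split]
  · have e : chainProd g (S' ++ [u]) * (g u t * (g v t * chainProd g (t :: T')))
        = -(chainProd g (S' ++ [u]) * (g v t * (g u t * chainProd g (t :: T')))) := by
      rw [← mul_assoc (g u t), hanti u t v t, neg_mul, mul_neg, mul_assoc]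
    rw [e]
    refine NOE.neg_left ?_
    refine NOE.trans (NOE.of_eq (by rw [← mul_assoc])) ?_
    refine NOE.trans (NOE.mul_right _ (noe_anti_chain hanti v t (S' ++ [u])).symm) ?_
    refine NOE.of_eq ?_
    rw [mul_assoc, ← chain_cons, ← chain_split]
  · rw [hsplit, ← mul_assoc (g u v), harn]; noncomm_ring

/-- product of the edges of a closed cycle vanishes -/
theorem chain_cycle_zero (hsymm : ∀ i j, g i j = g j i)
    (hsq : ∀ i j, g i j * g i j = 0)
    (hanti : ∀ i j k l, g i j * g k l = -(g k l * g i j))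
    (harnold : ∀ i j k, i ≠ j → j ≠ k → i ≠ k →
      g i j * g j k + g j k * g k i + g k i * g i j = 0) :
    ∀ (E : List (Fin n)) (b : Fin n), (b :: E).Nodup → E ≠ [] →
      chainProd g (b :: E ++ [b]) = 0
  | [], _, _, hne => absurd rfl hne
  | [c], b, hnd, _ => by
    have : chainProd g (b :: [c] ++ [b]) = g b c * g c b := by
      show chainProd g [b, c, b] = _
      rw [chain_cons, chain_pair]
    rw [this, hsymm c b, hsq]
  | c :: d :: E'', b, hnd, _ => by
    have hnd' : (b :: d :: E'').Nodup := by
      refine List.Nodup.sublist ?_ hnd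
      exact List.Sublist.cons₂ b (List.sublist_cons_self c (d :: E''))
    have ih := chain_cycle_zero hsymm hsq hanti harnold (d :: E'') b hnd' (by simp)
    have hdist : b ≠ c ∧ c ≠ d ∧ b ≠ d := by
      have hsub : List.Sublist [b, c, d] (b :: c :: d :: E'') :=
        List.cons_sublist_cons.mpr (List.cons_sublist_cons.mpr
          (List.cons_sublist_cons.mpr (List.nil_sublist _)))
      have h2 := List.Nodup.sublist hsub hnd
      simp only [List.nodup_cons, List.mem_cons, List.mem_singleton, List.not_mem_nil,
        or_false, not_or, List.nodup_nil, and_true] at h2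
      exact ⟨h2.1.1, h2.2.1, h2.1.2⟩
    obtain ⟨hbc, hcd, hbd⟩ := hdist
    have harn : g b c * g c d = g b c * g b d + g b d * g c d :=
      arn hsymm hanti harnold hbc hcd hbd
    have e0 : chainProd g (b :: (c :: d :: E'') ++ [b])
        = g b c * (g c d * chainProd g (d :: (E'' ++ [b]))) := by
      show chainProd g (b :: c :: d :: (E'' ++ [b])) = _
      rw [chain_cons, chain_cons]
    have ihe : g b d * chainProd g (d :: (E'' ++ [b])) = 0 := by
      rw [← chain_cons b d (E'' ++ [b])]
      exact ih
    rw [e0, ← mul_assoc, harn, add_mul]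
    have t1 : g b c * g b d * chainProd g (d :: (E'' ++ [b])) = 0 := by
      rw [mul_assoc, ihe, mul_zero]
    have t2 : g b d * g c d * chainProd g (d :: (E'' ++ [b])) = 0 := by
      rw [hanti b d c d, neg_mul, mul_assoc, ihe, mul_zero, neg_zero]
    rw [t1, t2, add_zero]

theorem mem_split_pair : ∀ (M : List (Fin n)) {i j : Fin n}, i ≠ j → i ∈ M → j ∈ M →
    ∃ (U V : List (Fin n)) (x y : Fin n), ((x = i ∧ y = j) ∨ (x = j ∧ y = i)) ∧
      M = U ++ x :: V ∧ y ∈ V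
  | [], i, j, _, hi, _ => absurd hi (by simp)
  | m :: M, i, j, hij, hi, hj => by
    by_cases hmi : m = i
    · subst hmi
      have hjM : j ∈ M := by
        rcases List.mem_cons.mp hj with h | h
        · exact absurd h.symm hij
        · exact h
      exact ⟨[], M, m, j, Or.inl ⟨rfl, rfl⟩, rfl, hjM⟩
    · by_cases hmj : m = j
      · subst hmj
        have hiM : i ∈ M := by
          rcases List.mem_cons.mp hi with h | h
          · exact absurd h.symm hmi
          · exact h
        exact ⟨[], M, m, i, Or.inr ⟨rfl, rfl⟩, rfl, hiM⟩
      · have hiM : i ∈ M := by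
          rcases List.mem_cons.mp hi with h | h
          · exact absurd h.symm hmi
          · exact h
        have hjM : j ∈ M := by
          rcases List.mem_cons.mp hj with h | h
          · exact absurd h.symm hmj
          · exact h
        obtain ⟨U, V, x, y, hxy, hM, hyV⟩ := mem_split_pair M hij hiM hjM
        exact ⟨m :: U, V, x, y, hxy, by rw [hM]; rfl, hyV⟩

/-- adding a chord to a chain gives zero -/
theorem cycle_zero (hsymm : ∀ i j, g i j = g j i)
    (hsq : ∀ i j, g i j * g i j = 0)
    (hanti : ∀ i j k l, g i j * g k l = -(g k l * g i j))
    (harnold : ∀ i j k, i ≠ j → j ≠ k → i ≠ k →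
      g i j * g j k + g j k * g k i + g k i * g i j = 0)
    {M : List (Fin n)} (hM : M.Nodup) {i j : Fin n} (hi : i ∈ M) (hj : j ∈ M)
    (hij : i ≠ j) : g i j * chainProd g M = 0 := by
  obtain ⟨U, V, x, y, hxy, rfl, hyV⟩ := mem_split_pair M hij hi hj
  have hgij : g i j = g x y := by
    rcases hxy with ⟨h1, h2⟩ | ⟨h1, h2⟩
    · rw [h1, h2]
    · rw [h1, h2]; exact hsymm i j
  rw [hgij]
  have hndxV : (x :: V).Nodup := (List.nodup_append.mp hM).2.1
  have hxV : x ∉ V := (List.nodup_cons.mp hndxV).1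
  have hVn : V.Nodup := (List.nodup_cons.mp hndxV).2
  have hkey : g x y * chainProd g (x :: V) = 0 := by
    have hrev : NOE (chainProd g ((V.reverse ++ [x]).reverse))
        (chainProd g (V.reverse ++ [x])) := rev_chain hsymm hanti _
    have e : (V.reverse ++ [x]).reverse = x :: V := by simp
    rw [e] at hrev
    have hno : NOE (g x y * chainProd g (x :: V))
        (chainProd g (V.reverse ++ [x, y])) := by
      refine NOE.trans (NOE.mul_left _ hrev) ?_
      refine NOE.trans (noe_anti_chain hanti x y _) (NOE.of_eq (chain_snoc2 _ _ _).symm)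
    have hyVr : y ∈ V.reverse := by simpa using hyV
    obtain ⟨P, Q, hPQ⟩ := List.append_of_mem hyVr
    have hVr : (P ++ y :: Q).Nodup := by
      rw [← hPQ]; exact List.nodup_reverse.mpr hVn
    have hyQn : (y :: Q).Nodup := (List.nodup_append.mp hVr).2.1
    have hyQ : y ∉ Q := (List.nodup_cons.mp hyQn).1
    have hQ : Q.Nodup := (List.nodup_cons.mp hyQn).2
    have hxQ : x ∉ Q := fun hq => hxV (by
      have : x ∈ V.reverse := by rw [hPQ]; exact List.mem_append_right _ (List.mem_cons_of_mem _ hq)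
      simpa using this)
    have hxy' : x ≠ y := fun h => hxV (h ▸ hyV)
    have hz : chainProd g (V.reverse ++ [x, y]) = 0 := by
      rw [hPQ]
      have e2 : (P ++ y :: Q) ++ [x, y] = P ++ y :: ((Q ++ [x]) ++ [y]) := by simp
      rw [e2, chain_split P y ((Q ++ [x]) ++ [y])]
      have hcc : chainProd g (y :: (Q ++ [x]) ++ [y]) = 0 := by
        refine chain_cycle_zero hsymm hsq hanti harnold (Q ++ [x]) y ?_ (by simp)
        have hperm : List.Perm (y :: (Q ++ [x])) (x :: y :: Q) := by
          refine List.perm_iff_count.mpr fun a => ?_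
          simp [List.count_append, List.count_cons]
          ring
        refine (hperm.symm).nodup ?_
        simp only [List.nodup_cons, List.mem_cons, not_or]
        exact ⟨⟨hxy', hxQ⟩, hyQ, hQ⟩
      have : chainProd g (y :: ((Q ++ [x]) ++ [y])) = 0 := hcc
      rw [this, mul_zero]
    exact hno.eq_zero hz
  have hsp : chainProd g (U ++ x :: V)
      = chainProd g (U ++ [x]) * chainProd g (x :: V) := chain_split U x V
  rw [hsp, ← mul_assoc]
  have hno3 : NOE (g x y * chainProd g (U ++ [x]) * chainProd g (x :: V))
      (chainProd g (U ++ [x]) * (g x y * chainProd g (x :: V))) :=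
    NOE.trans (NOE.mul_right _ (noe_anti_chain hanti x y (U ++ [x])))
      (NOE.of_eq (mul_assoc _ _ _))
  exact hno3.eq_zero (by rw [hkey, mul_zero])


/-- Merging two chains sharing one vertex, where the shared vertex is the last vertex of
the first chain. Fuel `k` bounds the length of the second chain (minus the shared vertex). -/
theorem lemM2 (hsymm : ∀ i j, g i j = g j i)
    (hanti : ∀ i j k l, g i j * g k l = -(g k l * g i j))
    (harnold : ∀ i j k, i ≠ j → j ≠ k → i ≠ k →
      g i j * g j k + g j k * g k i + g k i * g i j = 0) :
    ∀ (k : ℕ) (S T A' : List (Fin n)) (v : Fin n),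
      (S ++ T).length ≤ k → (A' ++ v :: (S ++ T)).Nodup →
      chainProd g (A' ++ [v]) * chainProd g (S ++ v :: T)
        ∈ spanPerm g (A' ++ v :: (S ++ T))
  | _, [], T, A', v, _, _ => by
    simp only [List.nil_append]
    rw [← chain_split A' v T]
    exact chain_mem_spanPerm (List.Perm.refl _)
  | _, s :: S₀, [], A', v, _, _ => by
    have hrev : NOE (chainProd g ((v :: (s :: S₀).reverse).reverse))
        (chainProd g (v :: (s :: S₀).reverse)) := rev_chain hsymm hanti _
    have e : (v :: (s :: S₀).reverse).reverse = (s :: S₀) ++ [v] := by simp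
    rw [e] at hrev
    have hno : NOE (chainProd g (A' ++ [v]) * chainProd g ((s :: S₀) ++ v :: ([] : List (Fin n))))
        (chainProd g (A' ++ v :: (s :: S₀).reverse)) := by
      refine NOE.trans (NOE.mul_left _ hrev) (NOE.of_eq ?_)
      rw [← chain_split]
    refine hno.mem (chain_mem_spanPerm ?_)
    refine List.perm_iff_count.mpr fun x => ?_
    simp [List.count_append, List.count_cons]
  | 0, s :: S₀, t :: T', A', v, hlen, hnd => by
    simp at hlen
  | k + 1, s :: S₀, t :: T', A', v, hlen, hnd => by
    obtain ⟨Sa, u, hSu⟩ : ∃ Sa u, s :: S₀ = Sa ++ [u] := by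
      rcases List.eq_nil_or_concat (s :: S₀) with h | ⟨Sa, u, h⟩
      · exact absurd h (by simp)
      · exact ⟨Sa, u, by simpa using h⟩
    rw [hSu] at hlen hnd ⊢
    have hndP : (Sa ++ u :: v :: t :: T').Nodup := by
      have h2 := (List.nodup_append.mp hnd).2.1
      refine List.Perm.nodup ?_ h2
      refine List.perm_iff_count.mpr fun x => ?_
      simp [List.count_append, List.count_cons]
      ring
    obtain ⟨x1, x2, hX1, hX2, hsum⟩ := pendant hsymm hanti harnold hndP
    have eS : (Sa ++ [u]) ++ v :: t :: T' = Sa ++ u :: v :: t :: T' := by simp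
    rw [eS, hsum, mul_add]
    refine Submodule.add_mem _ ?_ ?_
    · -- term with u
      have hno : NOE (chainProd g (A' ++ [v]) * x1)
          (chainProd g (A' ++ [v, u]) * chainProd g (Sa ++ u :: t :: T')) := by
        refine NOE.trans (NOE.mul_left _ hX1) (NOE.of_eq ?_)
        rw [← mul_assoc, ← chain_snoc2]
      refine hno.mem ?_
      · have hrec := lemM2 hsymm hanti harnold k Sa (t :: T') (A' ++ [v]) u ?_ ?_
        · have e3 : (A' ++ [v]) ++ [u] = A' ++ [v, u] := by simp
          rw [e3] at hrec
          refine spanPerm_le ?_ hrec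
          refine List.perm_iff_count.mpr fun x => ?_
          simp [List.count_append, List.count_cons]
          ring
        · have : ((Sa ++ [u]) ++ t :: T').length ≤ k + 1 := hlen
          simp at this ⊢
          omega
        · refine List.Perm.nodup ?_ hnd
          refine List.perm_iff_count.mpr fun x => ?_
          simp [List.count_append, List.count_cons]
          ring
    · -- term with t
      have hno : NOE (chainProd g (A' ++ [v]) * x2)
          (chainProd g (A' ++ [v, t]) * chainProd g (Sa ++ u :: t :: T')) := by
        refine NOE.trans (NOE.mul_left _ hX2) (NOE.of_eq ?_)
        rw [← mul_assoc, ← chain_snoc2]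
      refine hno.mem ?_
      · have hrec := lemM2 hsymm hanti harnold k (Sa ++ [u]) T' (A' ++ [v]) t ?_ ?_
        · have e3 : (A' ++ [v]) ++ [t] = A' ++ [v, t] := by simp
          have e4 : (Sa ++ [u]) ++ t :: T' = Sa ++ u :: t :: T' := by simp
          rw [e3, e4] at hrec
          refine spanPerm_le ?_ hrec
          refine List.perm_iff_count.mpr fun x => ?_
          simp [List.count_append, List.count_cons]
          ring
        · have : ((Sa ++ [u]) ++ t :: T').length ≤ k + 1 := hlen
          simp at this ⊢
          omega
        · refine List.Perm.nodup ?_ hnd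
          refine List.perm_iff_count.mpr fun x => ?_
          simp [List.count_append, List.count_cons]
          ring

/-- Merging two chains sharing one vertex (general position). -/
theorem lemM1 (hsymm : ∀ i j, g i j = g j i)
    (hanti : ∀ i j k l, g i j * g k l = -(g k l * g i j))
    (harnold : ∀ i j k, i ≠ j → j ≠ k → i ≠ k →
      g i j * g j k + g j k * g k i + g k i * g i j = 0) :
    ∀ (k : ℕ) (A₀ S T : List (Fin n)) (v : Fin n),
      A₀.length ≤ k → v ∈ A₀ → (A₀ ++ (S ++ T)).Nodup →
      chainProd g A₀ * chainProd g (S ++ v :: T) ∈ spanPerm g (A₀ ++ (S ++ T))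
  | 0, A₀, S, T, v, hlen, hv, _ => by
    have : A₀ = [] := List.length_eq_zero_iff.mp (Nat.le_zero.mp hlen)
    subst this
    simp at hv
  | k + 1, A₀, S, T, v, hlen, hv, hnd => by
    obtain ⟨A₁, A₂, rfl⟩ := List.append_of_mem hv
    cases A₂ with
    | nil =>
      have hnd2 : (A₁ ++ v :: (S ++ T)).Nodup := by
        refine List.Perm.nodup ?_ hnd
        refine List.perm_iff_count.mpr fun x => ?_
        simp [List.count_append, List.count_cons]
      have base := lemM2 hsymm hanti harnold (S ++ T).length S T A₁ v le_rfl hnd2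
      refine spanPerm_le ?_ base
      refine List.perm_iff_count.mpr fun x => ?_
      simp [List.count_append, List.count_cons]
    | cons a A₂' =>
      cases A₁ with
      | nil =>
        -- A₀ = v :: a :: A₂'
        have hrev : NOE (chainProd g (([] : List (Fin n)) ++ v :: a :: A₂'))
            (chainProd g ((a :: A₂').reverse ++ [v])) := by
          have h0 := (rev_chain hsymm hanti (v :: a :: A₂')).symm
          have e : (v :: a :: A₂').reverse = (a :: A₂').reverse ++ [v] := by simp
          rw [e] at h0
          exact h0
        have hnd2 : ((a :: A₂').reverse ++ v :: (S ++ T)).Nodup := by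
          refine List.Perm.nodup ?_ hnd
          refine List.perm_iff_count.mpr fun x => ?_
          simp [List.count_append, List.count_cons]
          ring
        have base := lemM2 hsymm hanti harnold (S ++ T).length S T
          ((a :: A₂').reverse) v le_rfl hnd2
        refine NOE.mem (NOE.mul_right _ hrev) (spanPerm_le ?_ base)
        refine List.perm_iff_count.mpr fun x => ?_
        simp [List.count_append, List.count_cons]
        ring
      | cons p A₁' =>
        obtain ⟨P, u, hPu⟩ : ∃ P u, p :: A₁' = P ++ [u] := by
          rcases List.eq_nil_or_concat (p :: A₁') with h | ⟨P, u, h⟩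
          · exact absurd h (by simp)
          · exact ⟨P, u, by simpa using h⟩
        rw [hPu] at hlen hnd ⊢
        have eA : (P ++ [u]) ++ v :: a :: A₂' = P ++ u :: v :: a :: A₂' := by simp
        rw [eA] at hlen hnd ⊢
        have hndA : (P ++ u :: v :: a :: A₂').Nodup := (List.nodup_append.mp hnd).1
        obtain ⟨x1, x2, hX1, hX2, hsum⟩ := pendant hsymm hanti harnold hndA
        have h2 := List.nodup_append'.mp hnd
        have hvmem : v ∈ P ++ u :: v :: a :: A₂' := by simp
        have hvST : v ∉ S ++ T := fun hmem => h2.2.2 hvmem hmem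
        have hndB : (S ++ v :: T).Nodup := by
          refine List.Perm.nodup (List.perm_middle.symm) ?_
          exact List.nodup_cons.mpr ⟨hvST, h2.2.1⟩
        have hvD : v ∉ P ++ u :: a :: A₂' := by
          have hperm : List.Perm (P ++ u :: v :: a :: A₂') (v :: (P ++ u :: a :: A₂')) := by
            refine List.perm_iff_count.mpr fun x => ?_
            simp [List.count_append, List.count_cons]
            ring
          exact (List.nodup_cons.mp (hperm.nodup hndA)).1
        have main : ∀ w : Fin n, w ∈ P ++ u :: a :: A₂' →
            (g v w * chainProd g (P ++ u :: a :: A₂')) * chainProd g (S ++ v :: T)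
              ∈ spanPerm g ((P ++ u :: v :: a :: A₂') ++ (S ++ T)) := by
          intro w hw
          have hwA : w ∈ P ++ u :: v :: a :: A₂' := by
            have hperm : List.Perm (P ++ u :: v :: a :: A₂') (v :: (P ++ u :: a :: A₂')) := by
              refine List.perm_iff_count.mpr fun x => ?_
              simp [List.count_append, List.count_cons]
              ring
            exact hperm.symm.mem_iff.mp (List.mem_cons_of_mem _ hw)
          have hwv : w ≠ v := fun h => hvD (h ▸ hw)
          have hwB : w ∉ S ++ v :: T := by
            intro hmem
            rcases List.mem_append.mp hmem with h | h
            · exact h2.2.2 hwA (List.mem_append_left _ h)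
            · rcases List.mem_cons.mp h with h | h
              · exact hwv h
              · exact h2.2.2 hwA (List.mem_append_right _ h)
          have hno : NOE ((g v w * chainProd g (P ++ u :: a :: A₂')) * chainProd g (S ++ v :: T))
              (chainProd g (P ++ u :: a :: A₂') * (g w v * chainProd g (S ++ v :: T))) := by
            refine NOE.trans
              (NOE.mul_right _ (noe_anti_chain hanti v w (P ++ u :: a :: A₂'))) ?_
            refine NOE.of_eq ?_
            rw [mul_assoc, hsymm v w]
          refine hno.mem ?_
          have hAspan : g w v * chainProd g (S ++ v :: T) ∈ spanPerm g (w :: (S ++ v :: T)) :=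
            lemA hsymm hanti harnold w T S v hndB hwB
          refine span_apply_mem (LinearMap.mulLeft ℚ (chainProd g (P ++ u :: a :: A₂'))) ?_ hAspan
          rintro z ⟨K, hK, rfl⟩
          simp only [LinearMap.mulLeft_apply]
          have hwK : w ∈ K := hK.mem_iff.mpr (List.mem_cons_self)
          obtain ⟨K₁, K₂, rfl⟩ := List.append_of_mem hwK
          have hK12 : List.Perm (K₁ ++ K₂) (S ++ v :: T) :=
            (List.perm_middle.symm.trans hK).cons_inv
          have hndD : ((P ++ u :: a :: A₂') ++ (S ++ v :: T)).Nodup := by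
            refine List.Perm.nodup ?_ hnd
            refine List.perm_iff_count.mpr fun x => ?_
            simp [List.count_append, List.count_cons]
            ring
          have hdnd : ((P ++ u :: a :: A₂') ++ (K₁ ++ K₂)).Nodup :=
            ((List.Perm.append_left _ hK12).symm).nodup hndD
          have hdlen : (P ++ u :: a :: A₂').length ≤ k := by
            simp at hlen ⊢
            omega
          have hrec := lemM1 hsymm hanti harnold k (P ++ u :: a :: A₂') K₁ K₂ w hdlen hw hdnd
          refine spanPerm_le ?_ hrec
          refine ((List.Perm.append_left _ hK12).trans ?_)
          refine List.perm_iff_count.mpr fun x => ?_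
          simp [List.count_append, List.count_cons]
          ring
        rw [hsum, add_mul]
        refine Submodule.add_mem _ ?_ ?_
        · exact NOE.mem (NOE.mul_right _ hX1) (main u (by simp))
        · exact NOE.mem (NOE.mul_right _ hX2) (main a (by simp))


/-- the spanning set of the main theorem: products of chains on disjoint index sets -/
def SSet (g : Fin n → Fin n → A) : Set A :=
  {a : A | ∃ L : List (List (Fin n)),
    L.flatten.Nodup ∧ (∀ J ∈ L, 2 ≤ J.length) ∧ a = (L.map (chainProd g)).prod}

theorem flatten_split {L : List (List (Fin n))} {i : Fin n} (h : i ∈ L.flatten) :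
    ∃ L₁ J L₂, L = L₁ ++ J :: L₂ ∧ i ∈ J := by
  rcases List.mem_flatten.mp h with ⟨l, hl, hil⟩
  obtain ⟨L₁, L₂, rfl⟩ := List.append_of_mem hl
  exact ⟨L₁, l, L₂, rfl, hil⟩

theorem flatten_split2 : ∀ (L : List (List (Fin n))) {i j : Fin n},
    i ∈ L.flatten → j ∈ L.flatten →
    (∃ L₁ J L₂, L = L₁ ++ J :: L₂ ∧ i ∈ J ∧ j ∈ J) ∨
    (∃ L₁ Ja L₂ Jb L₃ x y, ((x = i ∧ y = j) ∨ (x = j ∧ y = i)) ∧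
      L = L₁ ++ Ja :: (L₂ ++ Jb :: L₃) ∧ x ∈ Ja ∧ y ∈ Jb)
  | [], i, j, hi, _ => by simp at hi
  | K :: L', i, j, hi, hj => by
    rw [List.flatten_cons, List.mem_append] at hi hj
    by_cases hiK : i ∈ K
    · by_cases hjK : j ∈ K
      · exact Or.inl ⟨[], K, L', rfl, hiK, hjK⟩
      · have hjL : j ∈ L'.flatten := by tauto
        obtain ⟨L₂, Jb, L₃, hL', hjb⟩ := flatten_split hjL
        exact Or.inr ⟨[], K, L₂, Jb, L₃, i, j, Or.inl ⟨rfl, rfl⟩, by simp [hL'], hiK, hjb⟩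
    · by_cases hjK : j ∈ K
      · have hiL : i ∈ L'.flatten := by tauto
        obtain ⟨L₂, Jb, L₃, hL', hib⟩ := flatten_split hiL
        exact Or.inr ⟨[], K, L₂, Jb, L₃, j, i, Or.inr ⟨rfl, rfl⟩, by simp [hL'], hjK, hib⟩
      · have hiL : i ∈ L'.flatten := by tauto
        have hjL : j ∈ L'.flatten := by tauto
        rcases flatten_split2 L' hiL hjL with ⟨L₁, J, L₂, hL', h1, h2⟩ |
          ⟨L₁, Ja, L₂, Jb, L₃, x, y, hxy, hL', h1, h2⟩
        · exact Or.inl ⟨K :: L₁, J, L₂, by rw [hL']; rfl, h1, h2⟩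
        · exact Or.inr ⟨K :: L₁, Ja, L₂, Jb, L₃, x, y, hxy, by rw [hL']; rfl, h1, h2⟩

/-- auxiliary case of the step lemma: one endpoint fresh, one endpoint in a chain -/
theorem stepBeta (hsymm : ∀ i j, g i j = g j i)
    (hanti : ∀ i j k l, g i j * g k l = -(g k l * g i j))
    (harnold : ∀ i j k, i ≠ j → j ≠ k → i ≠ k →
      g i j * g j k + g j k * g k i + g k i * g i j = 0)
    (L₁ L₂ : List (List (Fin n))) (Ja : List (Fin n)) {x y : Fin n}
    (hnd : (L₁ ++ Ja :: L₂).flatten.Nodup)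
    (hlen : ∀ J ∈ L₁ ++ Ja :: L₂, 2 ≤ J.length)
    (hxa : x ∈ Ja) (hy : y ∉ (L₁ ++ Ja :: L₂).flatten) :
    g y x * ((L₁ ++ Ja :: L₂).map (chainProd g)).prod ∈ Submodule.span ℚ (SSet g) := by
  have hfl : (L₁ ++ Ja :: L₂).flatten = L₁.flatten ++ (Ja ++ L₂.flatten) := by
    simp
  have hndJa : Ja.Nodup := by
    rw [hfl] at hnd
    exact (List.nodup_append.mp ((List.nodup_append.mp hnd).2.1)).1
  have hyJa : y ∉ Ja := fun hmem =>
    hy (by rw [hfl]; exact List.mem_append_right _ (List.mem_append_left _ hmem))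
  have hprod : ((L₁ ++ Ja :: L₂).map (chainProd g)).prod
      = (L₁.map (chainProd g)).prod * (chainProd g Ja * (L₂.map (chainProd g)).prod) := by
    simp [mul_assoc]
  rw [hprod]
  have hno : NOE (g y x *
      ((L₁.map (chainProd g)).prod * (chainProd g Ja * (L₂.map (chainProd g)).prod)))
      ((L₁.map (chainProd g)).prod *
        ((g y x * chainProd g Ja) * (L₂.map (chainProd g)).prod)) := by
    refine NOE.trans (NOE.of_eq (by rw [← mul_assoc])) ?_
    refine NOE.trans (NOE.mul_right _ (noe_anti_prodchain hanti y x L₁)) ?_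
    exact NOE.of_eq (by rw [mul_assoc, ← mul_assoc (g y x)])
  refine hno.mem ?_
  obtain ⟨U, V, rfl⟩ := List.append_of_mem hxa
  have hAspan := lemA hsymm hanti harnold y V U x hndJa hyJa
  refine span_apply_mem ((LinearMap.mulLeft ℚ ((L₁.map (chainProd g)).prod)).comp
    (LinearMap.mulRight ℚ ((L₂.map (chainProd g)).prod))) ?_ hAspan
  rintro z ⟨K, hK, rfl⟩
  simp only [LinearMap.coe_comp, Function.comp_apply, LinearMap.mulRight_apply,
    LinearMap.mulLeft_apply]
  refine Submodule.subset_span ⟨L₁ ++ K :: L₂, ?_, ?_, ?_⟩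
  · have hfl2 : (L₁ ++ K :: L₂).flatten = L₁.flatten ++ (K ++ L₂.flatten) := by simp
    rw [hfl2]
    have q0 : List.Perm (y :: (L₁ ++ (U ++ x :: V) :: L₂).flatten)
        (L₁.flatten ++ ((y :: (U ++ x :: V)) ++ L₂.flatten)) := by
      refine List.perm_iff_count.mpr fun a => ?_
      simp [List.count_append, List.count_cons]
      ring
    have q1 : List.Perm (L₁.flatten ++ ((y :: (U ++ x :: V)) ++ L₂.flatten))
        (L₁.flatten ++ (K ++ L₂.flatten)) :=
      List.Perm.append_left _ (List.Perm.append_right _ hK.symm)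
    exact (q0.trans q1).nodup (List.nodup_cons.mpr ⟨hy, hnd⟩)
  · intro J hJ
    rcases List.mem_append.mp hJ with h | h
    · exact hlen J (List.mem_append_left _ h)
    · rcases List.mem_cons.mp h with h | h
      · subst h
        have hle := hK.length_eq
        simp at hle
        have := hlen (U ++ x :: V) (by simp)
        simp at this
        omega
      · exact hlen J (List.mem_append_right _ (List.mem_cons_of_mem _ h))
  · simp [mul_assoc]

/-- the key step: multiplying a disjoint product of chains by one generator -/
theorem step (hsymm : ∀ i j, g i j = g j i)
    (hsq : ∀ i j, g i j * g i j = 0)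
    (hanti : ∀ i j k l, g i j * g k l = -(g k l * g i j))
    (harnold : ∀ i j k, i ≠ j → j ≠ k → i ≠ k →
      g i j * g j k + g j k * g k i + g k i * g i j = 0)
    (L : List (List (Fin n))) (hnd : L.flatten.Nodup) (hlen : ∀ J ∈ L, 2 ≤ J.length)
    {i j : Fin n} (hij : i ≠ j) :
    g i j * (L.map (chainProd g)).prod ∈ Submodule.span ℚ (SSet g) := by
  by_cases hi : i ∈ L.flatten
  · by_cases hj : j ∈ L.flatten
    · rcases flatten_split2 L hi hj with ⟨L₁, J, L₂, rfl, hiJ, hjJ⟩ |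
        ⟨L₁, Ja, L₂, Jb, L₃, x, y, hxy, rfl, hxa, hyb⟩
      · -- same chain: contains a cycle, hence zero
        have hfl : (L₁ ++ J :: L₂).flatten = L₁.flatten ++ (J ++ L₂.flatten) := by simp
        have hndJ : J.Nodup := by
          rw [hfl] at hnd
          exact (List.nodup_append.mp ((List.nodup_append.mp hnd).2.1)).1
        have h0 : g i j * chainProd g J = 0 :=
          cycle_zero hsymm hsq hanti harnold hndJ hiJ hjJ hij
        have hprod : ((L₁ ++ J :: L₂).map (chainProd g)).prod
            = (L₁.map (chainProd g)).prod * (chainProd g J * (L₂.map (chainProd g)).prod) := by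
          simp [mul_assoc]
        rw [hprod]
        have hno : NOE (g i j *
            ((L₁.map (chainProd g)).prod * (chainProd g J * (L₂.map (chainProd g)).prod)))
            ((L₁.map (chainProd g)).prod *
              ((g i j * chainProd g J) * (L₂.map (chainProd g)).prod)) := by
          refine NOE.trans (NOE.of_eq (by rw [← mul_assoc])) ?_
          refine NOE.trans (NOE.mul_right _ (noe_anti_prodchain hanti i j L₁)) ?_
          exact NOE.of_eq (by rw [mul_assoc, ← mul_assoc (g i j)])
        refine hno.mem ?_
        have hz : (L₁.map (chainProd g)).prod *
            ((g i j * chainProd g J) * (L₂.map (chainProd g)).prod) = 0 := by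
          rw [h0, zero_mul, mul_zero]
        rw [hz]
        exact Submodule.zero_mem _
      · -- two distinct chains
        have hgij : g i j = g y x := by
          rcases hxy with ⟨h1, h2⟩ | ⟨h1, h2⟩
          · rw [h1, h2]; exact hsymm i j
          · rw [h1, h2]
        rw [hgij]
        have hfl : (L₁ ++ Ja :: (L₂ ++ Jb :: L₃)).flatten
            = L₁.flatten ++ (Ja ++ (L₂.flatten ++ (Jb ++ L₃.flatten))) := by simp
        have hnd' := hnd
        rw [hfl] at hnd'
        have hpartA := (List.nodup_append.mp hnd').2
        have hJand : Ja.Nodup := (List.nodup_append.mp hpartA.1).1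
        have hrest := (List.nodup_append'.mp hpartA.1).2
        have hJbnd : Jb.Nodup := (List.nodup_append.mp ((List.nodup_append.mp hrest.1).2.1)).1
        have hdisj : List.Disjoint Ja Jb := by
          intro a ha hb
          exact hrest.2 ha (List.mem_append_right _ (List.mem_append_left _ hb))
        have hJaJb : (Ja ++ Jb).Nodup := List.nodup_append'.mpr ⟨hJand, hJbnd, hdisj⟩
        have hyJa : y ∉ Ja := fun hmem => hdisj hmem hyb
        have hprod : ((L₁ ++ Ja :: (L₂ ++ Jb :: L₃)).map (chainProd g)).prod
            = (L₁.map (chainProd g)).prod * (chainProd g Ja *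
              ((L₂.map (chainProd g)).prod * (chainProd g Jb * (L₃.map (chainProd g)).prod))) := by
          simp [mul_assoc]
        rw [hprod]
        have hno : NOE (g y x * ((L₁.map (chainProd g)).prod * (chainProd g Ja *
            ((L₂.map (chainProd g)).prod * (chainProd g Jb * (L₃.map (chainProd g)).prod)))))
            ((L₁.map (chainProd g)).prod * ((g y x * chainProd g Ja) *
              ((L₂.map (chainProd g)).prod * (chainProd g Jb * (L₃.map (chainProd g)).prod)))) := by
          refine NOE.trans (NOE.of_eq (by rw [← mul_assoc])) ?_
          refine NOE.trans (NOE.mul_right _ (noe_anti_prodchain hanti y x L₁)) ?_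
          exact NOE.of_eq (by rw [mul_assoc, ← mul_assoc (g y x)])
        refine hno.mem ?_
        obtain ⟨U, V, rfl⟩ := List.append_of_mem hxa
        have hAspan := lemA hsymm hanti harnold y V U x hJand hyJa
        refine span_apply_mem ((LinearMap.mulLeft ℚ ((L₁.map (chainProd g)).prod)).comp
          (LinearMap.mulRight ℚ
            ((L₂.map (chainProd g)).prod * (chainProd g Jb * (L₃.map (chainProd g)).prod))))
          ?_ hAspan
        rintro z ⟨K, hK, rfl⟩
        simp only [LinearMap.coe_comp, Function.comp_apply, LinearMap.mulRight_apply,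
          LinearMap.mulLeft_apply]
        -- element : P₁ * (C K * (P₂ * (C Jb * P₃)))
        have hno2 : NOE ((L₁.map (chainProd g)).prod * (chainProd g K *
            ((L₂.map (chainProd g)).prod * (chainProd g Jb * (L₃.map (chainProd g)).prod))))
            ((L₁.map (chainProd g)).prod * ((L₂.map (chainProd g)).prod *
              ((chainProd g K * chainProd g Jb) * (L₃.map (chainProd g)).prod))) := by
          refine NOE.mul_left _ ?_
          refine NOE.trans (NOE.of_eq (by rw [← mul_assoc])) ?_
          refine NOE.trans
            (NOE.mul_right _ (noe_comm_chain_prodchain hanti K L₂)) ?_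
          exact NOE.of_eq (by rw [mul_assoc, ← mul_assoc (chainProd g K)])
        refine hno2.mem ?_
        obtain ⟨B₁, B₂, rfl⟩ := List.append_of_mem hyb
        have hyK : y ∈ K := hK.mem_iff.mpr (List.mem_cons_self)
        have q2 : List.Perm ((y :: (U ++ x :: V)) ++ (B₁ ++ B₂))
            ((U ++ x :: V) ++ (B₁ ++ y :: B₂)) := by
          refine List.perm_iff_count.mpr fun a => ?_
          simp [List.count_append, List.count_cons]
          ring
        have qK : List.Perm (K ++ (B₁ ++ B₂)) ((U ++ x :: V) ++ (B₁ ++ y :: B₂)) :=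
          (List.Perm.append_right _ hK).trans q2
        have hndKB : (K ++ (B₁ ++ B₂)).Nodup := qK.symm.nodup hJaJb
        have hrec := lemM1 hsymm hanti harnold K.length K B₁ B₂ y le_rfl hyK hndKB
        -- hrec : C K * C (B₁ ++ y :: B₂) ∈ spanPerm (K ++ (B₁ ++ B₂))
        refine span_apply_mem ((LinearMap.mulLeft ℚ ((L₁.map (chainProd g)).prod)).comp
          (((LinearMap.mulLeft ℚ ((L₂.map (chainProd g)).prod)).comp
            (LinearMap.mulRight ℚ ((L₃.map (chainProd g)).prod))))) ?_ hrec
        rintro z ⟨K', hK', rfl⟩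
        simp only [LinearMap.coe_comp, Function.comp_apply, LinearMap.mulRight_apply,
          LinearMap.mulLeft_apply]
        refine Submodule.subset_span ⟨L₁ ++ L₂ ++ K' :: L₃, ?_, ?_, ?_⟩
        · have hfl2 : (L₁ ++ L₂ ++ K' :: L₃).flatten
              = L₁.flatten ++ (L₂.flatten ++ (K' ++ L₃.flatten)) := by simp
          rw [hfl2]
          have r1 : List.Perm (L₁.flatten ++ (L₂.flatten ++ (K' ++ L₃.flatten)))
              (L₁.flatten ++ (L₂.flatten ++ ((((U ++ x :: V) ++ (B₁ ++ y :: B₂))) ++ L₃.flatten))) :=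
            List.Perm.append_left _ (List.Perm.append_left _
              (List.Perm.append_right _ (hK'.trans qK)))
          have r2 : List.Perm
              (L₁.flatten ++ (L₂.flatten ++ ((((U ++ x :: V) ++ (B₁ ++ y :: B₂))) ++ L₃.flatten)))
              (L₁.flatten ++ ((U ++ x :: V) ++ (L₂.flatten ++ ((B₁ ++ y :: B₂) ++ L₃.flatten)))) := by
            refine List.perm_iff_count.mpr fun a => ?_
            simp [List.count_append, List.count_cons]
            ring
          exact ((r1.trans r2).symm).nodup hnd'
        · intro J hJ
          rcases List.mem_append.mp hJ with h | h
          · rcases List.mem_append.mp h with h' | h'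
            · exact hlen J (List.mem_append_left _ h')
            · exact hlen J (List.mem_append_right _
                (List.mem_cons_of_mem _ (List.mem_append_left _ h')))
          · rcases List.mem_cons.mp h with h' | h'
            · subst h'
              have hle := (hK'.trans qK).length_eq
              have h2 := hlen (U ++ x :: V) (by simp)
              simp at hle h2
              omega
            · exact hlen J (List.mem_append_right _
                (List.mem_cons_of_mem _ (List.mem_append_right _ (List.mem_cons_of_mem _ h'))))
        · simp [mul_assoc]
    · -- j fresh
      obtain ⟨L₁, Ja, L₂, rfl, hiJ⟩ := flatten_split hi
      have hgij : g i j = g j i := hsymm i j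
      rw [hgij]
      exact stepBeta hsymm hanti harnold L₁ L₂ Ja hnd hlen hiJ hj
  · by_cases hj : j ∈ L.flatten
    · -- i fresh
      obtain ⟨L₁, Jb, L₂, rfl, hjJ⟩ := flatten_split hj
      exact stepBeta hsymm hanti harnold L₁ L₂ Jb hnd hlen hjJ hi
    · -- both fresh
      refine Submodule.subset_span ⟨[i, j] :: L, ?_, ?_, ?_⟩
      · have hfl3 : ([i, j] :: L).flatten = i :: j :: L.flatten := by simp
        rw [hfl3]
        refine List.nodup_cons.mpr ⟨?_, List.nodup_cons.mpr ⟨hj, hnd⟩⟩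
        simp only [List.mem_cons, not_or]
        exact ⟨hij, hi⟩
      · intro J hJ
        rcases List.mem_cons.mp hJ with rfl | h
        · simp
        · exact hlen J h
      · simp [chain_pair, mul_assoc]

end Main
end OS13


/-- In any ℚ-algebra containing elements `g i j` behaving like the degree-1 generators of
the Orlik–Solomon algebra of the braid arrangement on `[n]`, any product of generators
`g_{i_1 j_1} ⋯ g_{i_k j_k}` lies in the ℚ-span of products `g_{J_1} ⋯ g_{J_h}` of chains
on pairwise disjoint tuples of distinct indices, each of length at least 2. -/
theorem stmt13 {A : Type*} [Ring A] [Algebra ℚ A] {n : ℕ} (g : Fin n → Fin n → A)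
    (hsymm : ∀ i j, g i j = g j i)
    (hsq : ∀ i j, g i j * g i j = 0)
    (hanti : ∀ i j k l, g i j * g k l = -(g k l * g i j))
    (harnold : ∀ i j k, i ≠ j → j ≠ k → i ≠ k →
      g i j * g j k + g j k * g k i + g k i * g i j = 0)
    (P : List (Fin n × Fin n)) (hP : ∀ p ∈ P, p.1 ≠ p.2) :
    (P.map (fun p => g p.1 p.2)).prod ∈
      Submodule.span ℚ {a : A | ∃ L : List (List (Fin n)),
        L.flatten.Nodup ∧ (∀ J ∈ L, 2 ≤ J.length) ∧
        a = (L.map (chainProd g)).prod} := by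
  have hset : {a : A | ∃ L : List (List (Fin n)),
      L.flatten.Nodup ∧ (∀ J ∈ L, 2 ≤ J.length) ∧
      a = (L.map (chainProd g)).prod} = OS13.SSet g := rfl
  rw [hset]
  revert hP
  induction P with
  | nil =>
    intro _
    exact Submodule.subset_span ⟨[], by simp, by simp, by simp⟩
  | cons p P' ih =>
    intro hP
    have hih := ih (fun q hq => hP q (List.mem_cons_of_mem _ hq))
    rw [List.map_cons, List.prod_cons]
    have hmem := OS13.span_apply_mem (p := Submodule.span ℚ (OS13.SSet g))
      (LinearMap.mulLeft ℚ (g p.1 p.2)) ?_ hih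
    · simpa using hmem
    · rintro a ⟨L, h1, h2, rfl⟩
      simpa using OS13.step hsymm hsq hanti harnold L h1 h2 (hP p (List.mem_cons_self))
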